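/- Let G be a nontrivial abelian topological group and X = {x_n : n ∈ ℕ} a countable G-Tychonoff first countable space. Then every function X → G is of Baire class one, i.e., B_1(X,G) = G^X. -/

import Mathlib

open Filter Topology

/-- `X` is `G`-Tychonoff: every point outside a closed set can be completely separated
from it by a continuous `G`-valued function taking prescribed (distinct) values. -/
def GTychonoff (X G : Type*) [TopologicalSpace X] [TopologicalSpace G] : Prop :=
  ∀ A : Set X, IsClosed A → ∀ x ∉ A, ∀ y z : G, y ≠ z →
    ∃ f : X → G, Continuous f ∧ f x = y ∧ ∀ a ∈ A, f a = z

/-- If `G` is a nontrivial abelian topological group and `X` is a countable `G`-Tychonoff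
first countable space, then `B₁(X, G) = G^X`: every function `X → G` is a pointwise limit
of a sequence of continuous functions. -/
theorem stmt10 {G X : Type*} [AddCommGroup G] [TopologicalSpace G] [IsTopologicalAddGroup G]
    [Nontrivial G] [TopologicalSpace X] [T2Space X] [Countable X]
    [FirstCountableTopology X] (hXG : GTychonoff X G) (f : X → G) :
    ∃ F : ℕ → X → G, (∀ n, Continuous (F n)) ∧
      ∀ x, Tendsto (fun n => F n x) atTop (𝓝 (f x)) := by
  rcases isEmpty_or_nonempty X with h | h
  · exact ⟨fun _ _ => 0, fun _ => continuous_const, fun x => (IsEmpty.false x).elim⟩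
  obtain ⟨u, hu⟩ := exists_surjective_nat X
  have key : ∀ n, ∃ F : X → G, Continuous F ∧ ∀ i ≤ n, F (u i) = f (u i) := by
    intro n
    induction n with
    | zero =>
        exact ⟨fun _ => f (u 0), continuous_const, fun i hi => by
          simp [Nat.le_zero.mp hi]⟩
    | succ n ih =>
        obtain ⟨F, hF, hFv⟩ := ih
        by_cases hx : u (n + 1) ∈ u '' (Set.Iic n)
        · obtain ⟨i, hi, hiu⟩ := hx
          refine ⟨F, hF, fun j hj => ?_⟩
          rcases Nat.lt_succ_iff_lt_or_eq.mp (Nat.lt_succ_of_le hj) with hj' | hj'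
          · exact hFv j (Nat.lt_succ_iff.mp hj')
          · rw [hj', ← hiu, hFv i hi]
        · by_cases hy : f (u (n + 1)) - F (u (n + 1)) = 0
          · refine ⟨F, hF, fun j hj => ?_⟩
            rcases Nat.lt_succ_iff_lt_or_eq.mp (Nat.lt_succ_of_le hj) with hj' | hj'
            · exact hFv j (Nat.lt_succ_iff.mp hj')
            · rw [hj']
              exact (sub_eq_zero.mp hy).symm
          · have hA : IsClosed (u '' Set.Iic n) := by
              exact ((Set.finite_Iic n).image u).isClosed
            obtain ⟨g, hg, hg1, hg2⟩ :=
              hXG (u '' Set.Iic n) hA (u (n + 1)) hx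
                (f (u (n + 1)) - F (u (n + 1))) 0 hy
            refine ⟨F + g, hF.add hg, fun j hj => ?_⟩
            rcases Nat.lt_succ_iff_lt_or_eq.mp (Nat.lt_succ_of_le hj) with hj' | hj'
            · have hjle : j ≤ n := Nat.lt_succ_iff.mp hj'
              have : g (u j) = 0 := hg2 _ ⟨j, hjle, rfl⟩
              simp [this, hFv j hjle]
            · subst hj'
              simp [hg1]
  choose F hFc hFv using key
  refine ⟨F, hFc, fun x => ?_⟩
  obtain ⟨k, rfl⟩ := hu x
  have : ∀ᶠ n in atTop, F n (u k) = f (u k) :=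
    eventually_atTop.mpr ⟨k, fun n hn => hFv n k hn⟩
  exact Tendsto.congr' (this.mono fun n h => h.symm) tendsto_const_nhds
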